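/- Let (M,B) be a quadratic Malcev superalgebra, D an odd skew-supersymmetric Malcev operator, and A_0 ∈ M_0 satisfying D²(A_0) = (1/2)A_0A_0, D(A_0X) = A_0D(X) - D(A_0)X, (A_0X)Y = D(D(X)Y) + D²(XY) + (-1)^{x}D(X)D(Y) + (-1)^{xy}D²(Y)X, and A_0(XY) = D(D(X)Y) + D²(X)Y - (-1)^{xy}{D²(Y)X + D(D(Y)X)} for all homogeneous X,Y. Then the map D̃ on M ⊕ K e* (with e* odd, central) defined by D̃(e*) = 0 and D̃(X) = D(X) - (-1)^{x}B(X,A_0)e* is a Malcev operator of the central extension M ⊕ K e*. -/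

import Mathlib

open scoped BigOperators

/-- The sign `(-1)^(x·y)` for degrees `x, y ∈ ℤ/2`. -/
def sgn (K : Type) [Field K] (x y : ZMod 2) : K := (-1 : K) ^ (x.val * y.val)

section Defs

variable (K : Type) [Field K] (V : Type) [AddCommGroup V] [Module K V]

/-- `(g, mul)` is a Malcev superalgebra structure on `V`:  a `ℤ/2`-grading by submodules
which is a direct sum decomposition, such that the (bilinear) multiplication respects the
grading, is graded skew-symmetric (`XY = -(-1)^{xy} YX`) and satisfies the graded Malcev
identity. -/
def IsMalcevSuper (g : ZMod 2 → Submodule K V) (mul : V →ₗ[K] V →ₗ[K] V) : Prop :=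
  DirectSum.IsInternal g ∧
    (∀ x y X Y, X ∈ g x → Y ∈ g y → mul X Y ∈ g (x + y)) ∧
    (∀ x y X Y, X ∈ g x → Y ∈ g y → mul X Y = -(sgn K x y) • mul Y X) ∧
    (∀ x y z t X Y Z T, X ∈ g x → Y ∈ g y → Z ∈ g z → T ∈ g t →
      sgn K y z • mul (mul X Z) (mul Y T) =
        mul (mul (mul X Y) Z) T + sgn K x (y + z + t) • mul (mul (mul Y Z) T) X +
          sgn K (x + y) (z + t) • mul (mul (mul Z T) X) Y +
          sgn K t (x + y + z) • mul (mul (mul T X) Y) Z)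

/-- `B` is an invariant scalar product: even, supersymmetric, non-degenerate, invariant. -/
def IsQuadratic (g : ZMod 2 → Submodule K V) (mul : V →ₗ[K] V →ₗ[K] V)
    (B : V →ₗ[K] V →ₗ[K] K) : Prop :=
  (∀ x y X Y, X ∈ g x → Y ∈ g y → x ≠ y → B X Y = 0) ∧
    (∀ x y X Y, X ∈ g x → Y ∈ g y → B X Y = sgn K x y * B Y X) ∧
    (∀ X, (∀ Y, B X Y = 0) → X = 0) ∧
    (∀ X Y Z, B (mul X Y) Z = B X (mul Y Z))

/-- A linear endomorphism is homogeneous of degree `α`. -/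
def IsHomogMap (g : ZMod 2 → Submodule K V) (α : ZMod 2) (φ : V →ₗ[K] V) : Prop :=
  ∀ x X, X ∈ g x → φ X ∈ g (x + α)

/-- Malcev operator identity for a homogeneous endomorphism `φ`. -/
def IsMalcevOp (g : ZMod 2 → Submodule K V) (mul : V →ₗ[K] V →ₗ[K] V)
    (φ : V →ₗ[K] V) : Prop :=
  ∀ x y z X Y Z, X ∈ g x → Y ∈ g y → Z ∈ g z →
    φ (mul (mul X Y) Z) =
      mul (mul (φ X) Y) Z - sgn K x y • mul (φ Y) (mul X Z) -
        sgn K z (x + y) • mul (mul (φ Z) X) Y - sgn K x (y + z) • mul (φ (mul Y Z)) X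

/-- `φ` (homogeneous of degree `α`) is skew-supersymmetric with respect to `B`. -/
def IsSkewSuper (g : ZMod 2 → Submodule K V) (B : V →ₗ[K] V →ₗ[K] K) (α : ZMod 2)
    (φ : V →ₗ[K] V) : Prop :=
  ∀ x X Y, X ∈ g x → B (φ X) Y = -(sgn K α x) * B X (φ Y)

/-- Scalar-valued Malcev 2-cocycle. -/
def IsCocycle (g : ZMod 2 → Submodule K V) (mul : V →ₗ[K] V →ₗ[K] V)
    (ω : V →ₗ[K] V →ₗ[K] K) : Prop :=
  (∀ x y X Y, X ∈ g x → Y ∈ g y → ω X Y = -(sgn K x y) * ω Y X) ∧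
    (∀ x y z t X Y Z T, X ∈ g x → Y ∈ g y → Z ∈ g z → T ∈ g t →
      sgn K y z * ω (mul X Z) (mul Y T) =
        ω (mul (mul X Y) Z) T + sgn K x (y + z + t) * ω (mul (mul Y Z) T) X +
          sgn K (x + y) (z + t) * ω (mul (mul Z T) X) Y +
          sgn K t (x + y + z) * ω (mul (mul T X) Y) Z)

/-- The four compatibility conditions on an odd operator `D` and `A₀ ∈ M₀` entering the
generalized double extension. -/
def GDEConds (g : ZMod 2 → Submodule K V) (mul : V →ₗ[K] V →ₗ[K] V)
    (D : V →ₗ[K] V) (A0 : V) : Prop :=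
  D (D A0) = (1 / 2 : K) • mul A0 A0 ∧
    (∀ X, D (mul A0 X) = mul A0 (D X) - mul (D A0) X) ∧
    (∀ x y X Y, X ∈ g x → Y ∈ g y →
      mul (mul A0 X) Y =
        D (mul (D X) Y) + D (D (mul X Y)) + ((-1 : K) ^ x.val) • mul (D X) (D Y) +
          sgn K x y • mul (D (D Y)) X) ∧
    (∀ x y X Y, X ∈ g x → Y ∈ g y →
      mul A0 (mul X Y) =
        D (mul (D X) Y) + mul (D (D X)) Y -
          sgn K x y • (mul (D (D Y)) X + D (mul (D Y) X)))

/-- The grading of the generalized double extension `Ke ⊕ M ⊕ Ke*` (with `e`, `e*` odd),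
realized on the carrier `K × V × K`. -/
def gdeGrading (g : ZMod 2 → Submodule K V) : ZMod 2 → Submodule K (K × V × K) := fun x =>
  if x = 0 then (⊥ : Submodule K K).prod ((g 0).prod (⊥ : Submodule K K))
  else (⊤ : Submodule K K).prod ((g 1).prod (⊤ : Submodule K K))

/-- The multiplication of the generalized double extension `k = Ke ⊕ M ⊕ Ke*`:
`ee = A₀`, `eX = D(X) - (-1)^x B(X,A₀)e*`, `XY = (XY)_M - B(D(X),Y)e*`, `e* k = 0`
(and `Xe = -(-1)^x eX` by graded skew-symmetry), written out bilinearly on the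
carrier `K × V × K` (coordinates: coefficient of `e`, element of `M`, coefficient of `e*`). -/
def GDEMulFormula (g : ZMod 2 → Submodule K V) (mul : V →ₗ[K] V →ₗ[K] V)
    (B : V →ₗ[K] V →ₗ[K] K) (D : V →ₗ[K] V) (A0 : V)
    (mulE : (K × V × K) →ₗ[K] (K × V × K) →ₗ[K] (K × V × K)) : Prop :=
  ∀ (p q : ZMod 2) (a c b d : K) (X Y : V), X ∈ g p → Y ∈ g q →
    mulE (a, X, c) (b, Y, d) =
      (0, (a * b) • A0 + mul X Y + a • D Y - ((-1 : K) ^ p.val * b) • D X,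
        -(a * (-1 : K) ^ q.val * B Y A0) + b * B X A0 - B (D X) Y)

/-- `B`-irreducibility: every graded ideal on which `B` is non-degenerate is trivial. -/
def BIrreducible (g : ZMod 2 → Submodule K V) (mul : V →ₗ[K] V →ₗ[K] V)
    (B : V →ₗ[K] V →ₗ[K] K) : Prop :=
  ∀ I : Submodule K V, (∀ X ∈ I, ∀ Y, mul X Y ∈ I) →
    I = (I ⊓ g 0) ⊔ (I ⊓ g 1) →
    (∀ X ∈ I, (∀ Y ∈ I, B X Y = 0) → X = 0) → I = ⊥ ∨ I = ⊤

end Defs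


private lemma stmt6v0 : (0 : ZMod 2).val = 0 := rfl
private lemma stmt6v1 : (1 : ZMod 2).val = 1 := rfl
private lemma stmt6v2 : (2 : ZMod 2).val = 0 := rfl
private lemma stmt6v3 : (3 : ZMod 2).val = 1 := rfl
private lemma stmt6v4 : (4 : ZMod 2).val = 0 := rfl

/-- the map `D̃` with `D̃(e*) = 0`, `D̃(X) = D(X) - (-1)^x B(X,A₀) e*` is a
Malcev operator of the central extension `M ⊕ Ke*`. -/
theorem stmt6 (K : Type) [Field K] [CharZero K] [IsAlgClosed K]
    (V : Type) [AddCommGroup V] [Module K V] [FiniteDimensional K V]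
    (g : ZMod 2 → Submodule K V) (mul : V →ₗ[K] V →ₗ[K] V) (B : V →ₗ[K] V →ₗ[K] K)
    (hM : IsMalcevSuper K V g mul) (hQ : IsQuadratic K V g mul B)
    (D : V →ₗ[K] V) (hD1 : IsHomogMap K V g 1 D)
    (hDop : IsMalcevOp K V g mul D) (hDsk : IsSkewSuper K V g B 1 D)
    (A0 : V) (hA0 : A0 ∈ g 0) (hconds : GDEConds K V g mul D A0)
    (mulE : (V × K) →ₗ[K] (V × K) →ₗ[K] (V × K))
    (hmulE : ∀ (X Y : V) (a b : K), mulE (X, a) (Y, b) = (mul X Y, -(B (D X) Y)))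
    (Dt : (V × K) →ₗ[K] (V × K))
    (hDt0 : Dt (0, 1) = 0)
    (hDt : ∀ x X, X ∈ g x → Dt (X, 0) = (D X, -((-1 : K) ^ x.val * B X A0))) :
    IsMalcevOp K (V × K)
      (fun x => if x = 0 then (g 0).prod (⊥ : Submodule K K) else (g 1).prod (⊤ : Submodule K K))
      mulE Dt := by
  intro x y z Xp Yp Zp hXp hYp hZp
  have hgr : ∀ (w : ZMod 2) (P : V × K),
      (P ∈ if w = 0 then (g 0).prod (⊥ : Submodule K K) else (g 1).prod (⊤ : Submodule K K)) →
      P.1 ∈ g w := by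
    intro w P hP
    by_cases hw : w = 0
    · subst hw; rw [if_pos rfl] at hP; exact hP.1
    · have hw1 : w = 1 := (by decide : ∀ w : ZMod 2, ¬ w = 0 → w = 1) w hw
      rw [if_neg hw] at hP; rw [hw1]; exact hP.1
  obtain ⟨X, a⟩ := Xp
  obtain ⟨Y, b⟩ := Yp
  obtain ⟨Z, c⟩ := Zp
  have hX : X ∈ g x := hgr x (X, a) hXp
  have hY : Y ∈ g y := hgr y (Y, b) hYp
  have hZ : Z ∈ g z := hgr z (Z, c) hZp
  have Dtp : ∀ (w : ZMod 2) (W : V) (cc : K), W ∈ g w →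
      Dt (W, cc) = (D W, -((-1 : K) ^ w.val * B W A0)) := by
    intro w W cc hW
    have h : ((W, cc) : V × K) = (W, 0) + cc • ((0 : V), (1 : K)) := by
      simp [Prod.ext_iff]
    rw [h, map_add, map_smul, hDt w W hW, hDt0, smul_zero, add_zero]
  have hXY : mul X Y ∈ g (x + y) := hM.2.1 x y X Y hX hY
  have hYZ : mul Y Z ∈ g (y + z) := hM.2.1 y z Y Z hY hZ
  have hXYZ : mul (mul X Y) Z ∈ g (x + y + z) := hM.2.1 (x + y) z (mul X Y) Z hXY hZ
  have hDY : D Y ∈ g (y + 1) := hD1 y Y hY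
  have hDZ : D Z ∈ g (z + 1) := hD1 z Z hZ
  have hDYX : mul (D Y) X ∈ g (y + 1 + x) := hM.2.1 (y + 1) x (D Y) X hDY hX
  have hDZX : mul (D Z) X ∈ g (z + 1 + x) := hM.2.1 (z + 1) x (D Z) X hDZ hX
  have hXDZ : mul X (D Z) ∈ g (x + (z + 1)) := hM.2.1 x (z + 1) X (D Z) hX hDZ
  have hXDY : mul X (D Y) ∈ g (x + (y + 1)) := hM.2.1 x (y + 1) X (D Y) hX hDY
  have hDDYZ : D (D (mul Y Z)) ∈ g (y + z + 1 + 1) :=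
    hD1 (y + z + 1) (D (mul Y Z)) (hD1 (y + z) (mul Y Z) hYZ)
  simp only [hmulE]
  rw [Dtp x X a hX, Dtp y Y b hY, Dtp z Z c hZ,
    Dtp (x + y + z) (mul (mul X Y) Z) (-(B (D (mul X Y)) Z)) hXYZ,
    Dtp (y + z) (mul Y Z) (-(B (D Y) Z)) hYZ]
  simp only [hmulE]
  simp only [Prod.smul_mk, Prod.mk_sub_mk, smul_eq_mul, Prod.mk.injEq]
  constructor
  · exact hDop x y z X Y Z hX hY hZ
  · -- scalar (e*-component) identity
    have S1 : (-1 : K) ^ (x + y + z).val * B (mul (mul X Y) Z) A0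
        = B (mul A0 (mul X Y)) Z := by
      by_cases h0 : x + y + z = 0
      · have hw : mul (mul X Y) Z ∈ g 0 := h0 ▸ hXYZ
        have i1 : B (mul A0 (mul X Y)) Z = B A0 (mul (mul X Y) Z) := hQ.2.2.2 A0 (mul X Y) Z
        have i2 : B A0 (mul (mul X Y) Z) = sgn K 0 0 * B (mul (mul X Y) Z) A0 :=
          hQ.2.1 0 0 A0 (mul (mul X Y) Z) hA0 hw
        rw [h0, i1, i2]
        norm_num [sgn, stmt6v0]
      · have h1 : B (mul (mul X Y) Z) A0 = 0 :=
          hQ.1 (x + y + z) 0 (mul (mul X Y) Z) A0 hXYZ hA0 h0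
        have hA0XY : mul A0 (mul X Y) ∈ g (x + y) := by
          have := hM.2.1 0 (x + y) A0 (mul X Y) hA0 hXY
          rwa [zero_add] at this
        have hzz : ∀ w : ZMod 2, w + w = 0 := by decide
        have hne : (x + y) ≠ z := fun h => h0 (by rw [h, hzz])
        have h2 : B (mul A0 (mul X Y)) Z = 0 :=
          hQ.1 (x + y) z (mul A0 (mul X Y)) Z hA0XY hZ hne
        rw [h1, h2, mul_zero]
    have S2 : B (mul A0 (mul X Y)) Z
        = B (D (mul (D X) Y)) Z + B (mul (D (D X)) Y) Z
          - sgn K x y * (B (mul (D (D Y)) X) Z + B (D (mul (D Y) X)) Z) := by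
      rw [hconds.2.2.2 x y X Y hX hY]
      simp only [map_add, map_sub, map_smul, LinearMap.add_apply, LinearMap.sub_apply,
        LinearMap.smul_apply, smul_eq_mul]
      try ring
    have S3 : B (mul (D (D Y)) X) Z = B (D (D Y)) (mul X Z) := hQ.2.2.2 (D (D Y)) X Z
    have S4 : B (mul (D (D X)) Y) Z = B (D (D X)) (mul Y Z) := hQ.2.2.2 (D (D X)) Y Z
    have S5 : B (D (D X)) (mul Y Z) = -(B X (D (D (mul Y Z)))) := by
      have h1 := hDsk (x + 1) (D X) (mul Y Z) (hD1 x X hX)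
      have h2 := hDsk x X (D (mul Y Z)) hX
      have hs : sgn K 1 (x + 1) * sgn K 1 x = -1 := by
        rcases (by decide : ∀ w : ZMod 2, w = 0 ∨ w = 1) x with rfl | rfl <;> norm_num [sgn, stmt6v0, stmt6v1, stmt6v2, stmt6v3, stmt6v4]
      linear_combination h1 - sgn K 1 (x + 1) * h2 + B X (D (D (mul Y Z))) * hs
    have S6 : sgn K x (y + z) * B (D (D (mul Y Z))) X = B X (D (D (mul Y Z))) := by
      have hsup := hQ.2.1 (y + z + 1 + 1) x (D (D (mul Y Z))) X hDDYZ hX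
      have hs : sgn K x (y + z) * sgn K (y + z + 1 + 1) x = 1 := by
        rcases (by decide : ∀ w : ZMod 2, w = 0 ∨ w = 1) x with rfl | rfl <;> rcases (by decide : ∀ w : ZMod 2, w = 0 ∨ w = 1) y with rfl | rfl <;>
          rcases (by decide : ∀ w : ZMod 2, w = 0 ∨ w = 1) z with rfl | rfl <;>
          norm_num [sgn, stmt6v0, stmt6v1, stmt6v2, stmt6v3, stmt6v4]
      linear_combination sgn K x (y + z) * hsup + B X (D (D (mul Y Z))) * hs
    have e1 := hDsk (y + 1 + x) (mul (D Y) X) Z hDYX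
    have e2 : B (mul (D Y) X) (D Z) = B (D Y) (mul X (D Z)) := hQ.2.2.2 (D Y) X (D Z)
    have e3 := hQ.2.1 (y + 1) (x + (z + 1)) (D Y) (mul X (D Z)) hDY hXDZ
    have e4 : B (mul X (D Z)) (D Y) = B X (mul (D Z) (D Y)) := hQ.2.2.2 X (D Z) (D Y)
    have e5 : B X (mul (D Z) (D Y)) = -(sgn K (z + 1) (y + 1) * B X (mul (D Y) (D Z))) := by
      rw [hM.2.2.1 (z + 1) (y + 1) (D Z) (D Y) hDZ hDY, map_smul, smul_eq_mul]
      ring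
    have f1 := hDsk (z + 1 + x) (mul (D Z) X) Y hDZX
    have f2 : B (mul (D Z) X) (D Y) = B (D Z) (mul X (D Y)) := hQ.2.2.2 (D Z) X (D Y)
    have f3 := hQ.2.1 (z + 1) (x + (y + 1)) (D Z) (mul X (D Y)) hDZ hXDY
    have f4 : B (mul X (D Y)) (D Z) = B X (mul (D Y) (D Z)) := hQ.2.2.2 X (D Y) (D Z)
    have hs7 : sgn K x y * (sgn K 1 (y + 1 + x) * (sgn K (y + 1) (x + (z + 1)) *
          sgn K (z + 1) (y + 1)))
        = -(sgn K z (x + y) * (sgn K 1 (z + 1 + x) * sgn K (z + 1) (x + (y + 1)))) := by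
      rcases (by decide : ∀ w : ZMod 2, w = 0 ∨ w = 1) x with rfl | rfl <;> rcases (by decide : ∀ w : ZMod 2, w = 0 ∨ w = 1) y with rfl | rfl <;>
          rcases (by decide : ∀ w : ZMod 2, w = 0 ∨ w = 1) z with rfl | rfl <;>
        norm_num [sgn, stmt6v0, stmt6v1, stmt6v2, stmt6v3, stmt6v4]
    have S7 : sgn K x y * B (D (mul (D Y) X)) Z
        = sgn K z (x + y) * B (D (mul (D Z) X)) Y := by
      have hd : B (D (mul (D Y) X)) Z = sgn K 1 (y + 1 + x) * (sgn K (y + 1) (x + (z + 1)) *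
          (sgn K (z + 1) (y + 1) * B X (mul (D Y) (D Z)))) := by
        rw [e1, e2, e3, e4, e5]; ring
      have hf : B (D (mul (D Z) X)) Y = -(sgn K 1 (z + 1 + x) *
          (sgn K (z + 1) (x + (y + 1)) * B X (mul (D Y) (D Z)))) := by
        rw [f1, f2, f3, f4]; ring
      rw [hd, hf]
      linear_combination B X (mul (D Y) (D Z)) * hs7
    linear_combination -S1 - S2 + sgn K x y * S3 - S4 - S5 - S6 + S7
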